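/- Fix agents N = {1,…,5}, houses H = {h1,…,h5}, endowments e(1) = ½δ_{h1} + ½δ_{h2}, e(2) = ½δ_{h3} + ½δ_{h5}, e(3) = ½δ_{h1} + ½δ_{h4}, e(4) = ½δ_{h2} + ½δ_{h4}, e(5) = ½δ_{h3} + ½δ_{h5}, and the linear-order profile given by: agent 1: h3 ≻ h1 ≻ h2 ≻ h4 ≻ h5; agent 2: h5 ≻ h1 ≻ h3 ≻ h2 ≻ h4; agent 3: h1 ≻ h4 ≻ h2 ≻ h3 ≻ h5; agent 4: h2 ≻ h4 ≻ h1 ≻ h3 ≻ h5; agent 5: h5 ≻ h3 ≻ h1 ≻ h2 ≻ h4. Then the unique assignment that is SD-individually rational and SD-efficient with respect to this profile is y with y(1) = ½δ_{h2} + ½δ_{h3}, y(2) = ½δ_{h1} + ½δ_{h5}, y(3) = ½δ_{h1} + ½δ_{h4}, y(4) = ½δ_{h2} + ½δ_{h4}, y(5) = ½δ_{h3} + ½δ_{h5}. -/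

import Mathlib

open Finset
open scoped Classical

variable {N H : Type*}

noncomputable section

/-- The total weight that allocation `p` puts on houses weakly preferred to `h`
(with respect to the preference relation `R`, where `R a b` means `a ≿ b`). -/
def upperSum [Fintype H] (R : H → H → Prop) (p : H → ℝ) (h : H) : ℝ :=
  ∑ h' ∈ Finset.univ.filter (fun h' => R h' h), p h'

/-- `p ≿^SD q` (stochastic dominance). -/
def SDge [Fintype H] (R : H → H → Prop) (p q : H → ℝ) : Prop :=
  ∀ h, upperSum R q h ≤ upperSum R p h

/-- `p ≻^SD q`. -/
def SDgt [Fintype H] (R : H → H → Prop) (p q : H → ℝ) : Prop :=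
  SDge R p q ∧ ¬ SDge R q p

/-- Total weight that `p` puts on the indifference class of `h`. -/
def classSum [Fintype H] (R : H → H → Prop) (p : H → ℝ) (h : H) : ℝ :=
  ∑ h' ∈ Finset.univ.filter (fun h' => R h' h ∧ R h h'), p h'

/-- `p ~^DL q`: all indifference-class sums agree. -/
def DLsim [Fintype H] (R : H → H → Prop) (p q : H → ℝ) : Prop :=
  ∀ h, classSum R p h = classSum R q h

/-- `p ≻^DL q`: there is an indifference class (represented by a house `h`) on which
`p` puts strictly more weight, while all strictly more preferred classes have equal sums. -/
def DLgt [Fintype H] (R : H → H → Prop) (p q : H → ℝ) : Prop :=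
  ∃ h, classSum R q h < classSum R p h ∧
    ∀ h', R h' h ∧ ¬ R h h' → classSum R p h' = classSum R q h'

/-- `p ≿^DL q`. -/
def DLge [Fintype H] (R : H → H → Prop) (p q : H → ℝ) : Prop :=
  DLgt R p q ∨ DLsim R p q

/-- An allocation is a nonnegative function on houses. -/
def IsAlloc (p : H → ℝ) : Prop := ∀ h, 0 ≤ p h

/-- A preference is a total preorder (total and transitive relation). -/
def TotalPreorderRel (R : H → H → Prop) : Prop := Total R ∧ Transitive R

/-- An assignment with respect to endowments `e`. -/
def IsAssignment [Fintype N] (e x : N → H → ℝ) : Prop :=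
  (∀ i, IsAlloc (x i)) ∧ ∀ h, ∑ i, x i h = ∑ i, e i h

/-- SD-efficiency. -/
def SDEfficient [Fintype N] [Fintype H] (R : N → H → H → Prop) (e x : N → H → ℝ) : Prop :=
  ¬ ∃ y, IsAssignment e y ∧ (∀ i, SDge (R i) (y i) (x i)) ∧ ∃ i, SDgt (R i) (y i) (x i)

/-- SD individual rationality. -/
def SDIR [Fintype H] (R : N → H → H → Prop) (e x : N → H → ℝ) : Prop :=
  ∀ i, SDge (R i) (x i) (e i)

/-- SD core stability. -/
def SDCoreStable [Fintype N] [Fintype H] (R : N → H → H → Prop) (e x : N → H → ℝ) : Prop :=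
  ¬ ∃ (S : Finset N) (y : N → H → ℝ), S.Nonempty ∧ (∀ i ∈ S, IsAlloc (y i)) ∧
      (∀ h, ∑ i ∈ S, y i h = ∑ i ∈ S, e i h) ∧ ∀ i ∈ S, SDgt (R i) (y i) (x i)

/-- SD strict core membership. -/
def SDStrictCore [Fintype N] [Fintype H] (R : N → H → H → Prop) (e x : N → H → ℝ) : Prop :=
  ¬ ∃ (S : Finset N) (y : N → H → ℝ), S.Nonempty ∧ (∀ i ∈ S, IsAlloc (y i)) ∧
      (∀ h, ∑ i ∈ S, y i h = ∑ i ∈ S, e i h) ∧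
      (∀ i ∈ S, SDge (R i) (y i) (x i)) ∧ ∃ i ∈ S, SDgt (R i) (y i) (x i)

/-- The allocation consisting of exactly one unit of house `h`. -/
def delta [DecidableEq H] (h : H) : H → ℝ := fun h' => if h' = h then 1 else 0

end

/-- A (strict) linear order relation: total, transitive and antisymmetric
(`R a b` means `a ≿ b`). -/
def LinOrderRel (R : H → H → Prop) : Prop := Total R ∧ Transitive R ∧ AntiSymmetric R

/-- Endowments: e(1) = ½δ₁+½δ₂, e(2) = ½δ₃+½δ₅, e(3) = ½δ₁+½δ₄,
e(4) = ½δ₂+½δ₄, e(5) = ½δ₃+½δ₅ (houses h1,…,h5 encoded as 0,…,4). -/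
noncomputable def e5 : Fin 5 → Fin 5 → ℝ :=
  ![![1/2, 1/2, 0, 0, 0],
    ![0, 0, 1/2, 0, 1/2],
    ![1/2, 0, 0, 1/2, 0],
    ![0, 1/2, 0, 1/2, 0],
    ![0, 0, 1/2, 0, 1/2]]

/-- Ranks (0 = best): agent 1: h3≻h1≻h2≻h4≻h5; agent 2: h5≻h1≻h3≻h2≻h4;
agent 3: h1≻h4≻h2≻h3≻h5; agent 4: h2≻h4≻h1≻h3≻h5; agent 5: h5≻h3≻h1≻h2≻h4. -/
def rank14 : Fin 5 → Fin 5 → ℕ :=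
  ![![1, 2, 0, 3, 4], ![1, 3, 2, 4, 0], ![0, 2, 3, 1, 4], ![2, 0, 3, 1, 4], ![2, 3, 1, 4, 0]]

/-- The preference profile. -/
def R14 (i : Fin 5) (h h' : Fin 5) : Prop := rank14 i h ≤ rank14 i h'

/-- The assignment y: y(1) = ½δ₂+½δ₃, y(2) = ½δ₁+½δ₅, and agents 3, 4, 5 keep
their endowments. -/
noncomputable def y14 : Fin 5 → Fin 5 → ℝ :=
  ![![0, 1/2, 1/2, 0, 0],
    ![1/2, 0, 0, 0, 1/2],
    ![1/2, 0, 0, 1/2, 0],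
    ![0, 1/2, 0, 1/2, 0],
    ![0, 0, 1/2, 0, 1/2]]


private lemma y14_assign : IsAssignment e5 y14 := by
  constructor
  · intro i h; fin_cases i <;> fin_cases h <;> norm_num [y14, IsAlloc]
  · intro h; fin_cases h <;>
      norm_num [y14, e5, Fin.sum_univ_five, Matrix.vecHead, Matrix.vecTail, Matrix.cons_val_one, Matrix.cons_val_two, Matrix.cons_val_three, Matrix.cons_val_four]

private lemma y14_SDIR : SDIR R14 e5 y14 := by
  intro i h
  fin_cases i <;> fin_cases h <;>
    norm_num [upperSum, Finset.sum_filter, R14, rank14, Fin.sum_univ_five, e5, y14,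
      Matrix.vecHead, Matrix.vecTail, Matrix.cons_val_one, Matrix.cons_val_two, Matrix.cons_val_three, Matrix.cons_val_four]

set_option maxHeartbeats 2000000 in
private lemma y14_eff : SDEfficient R14 e5 y14 := by
  rintro ⟨z, ⟨hzn, hzs⟩, hge, i0, hgt1, hgt2⟩
  have s0 := hzs 0; have s1 := hzs 1; have s2 := hzs 2; have s3 := hzs 3; have s4 := hzs 4
  norm_num [e5, Fin.sum_univ_five, Matrix.vecHead, Matrix.vecTail, Matrix.cons_val_one, Matrix.cons_val_two, Matrix.cons_val_three, Matrix.cons_val_four] at s0 s1 s2 s3 s4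
  have G00 := hge 0 0; have G01 := hge 0 1; have G02 := hge 0 2; have G03 := hge 0 3; have G04 := hge 0 4
  have G10 := hge 1 0; have G11 := hge 1 1; have G12 := hge 1 2; have G13 := hge 1 3; have G14 := hge 1 4
  have G20 := hge 2 0; have G21 := hge 2 1; have G22 := hge 2 2; have G23 := hge 2 3; have G24 := hge 2 4
  have G30 := hge 3 0; have G31 := hge 3 1; have G32 := hge 3 2; have G33 := hge 3 3; have G34 := hge 3 4
  have G40 := hge 4 0; have G41 := hge 4 1; have G42 := hge 4 2; have G43 := hge 4 3; have G44 := hge 4 4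
  norm_num [upperSum, Finset.sum_filter, R14, rank14, Fin.sum_univ_five, y14, Matrix.vecHead, Matrix.vecTail, Matrix.cons_val_one, Matrix.cons_val_two, Matrix.cons_val_three, Matrix.cons_val_four] at G00 G01 G02 G03 G04 G10 G11 G12 G13 G14 G20 G21 G22 G23 G24 G30 G31 G32 G33 G34 G40 G41 G42 G43 G44
  rw [SDge] at hgt2; push_neg at hgt2
  obtain ⟨h0, hlt⟩ := hgt2
  have hi : i0 = 0 ∨ i0 = 1 ∨ i0 = 2 ∨ i0 = 3 ∨ i0 = 4 := by omega
  have hh : h0 = 0 ∨ h0 = 1 ∨ h0 = 2 ∨ h0 = 3 ∨ h0 = 4 := by omega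
  rcases hi with rfl|rfl|rfl|rfl|rfl <;> rcases hh with rfl|rfl|rfl|rfl|rfl <;>
    norm_num [upperSum, Finset.sum_filter, R14, rank14, Fin.sum_univ_five, y14,
      Matrix.vecHead, Matrix.vecTail, Matrix.cons_val_one, Matrix.cons_val_two, Matrix.cons_val_three, Matrix.cons_val_four] at hlt <;>
    linarith [hzn 0 0, hzn 0 1, hzn 0 2, hzn 0 3, hzn 0 4,
      hzn 1 0, hzn 1 1, hzn 1 2, hzn 1 3, hzn 1 4,
      hzn 2 0, hzn 2 1, hzn 2 2, hzn 2 3, hzn 2 4,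
      hzn 3 0, hzn 3 1, hzn 3 2, hzn 3 3, hzn 3 4,
      hzn 4 0, hzn 4 1, hzn 4 2, hzn 4 3, hzn 4 4]

set_option maxHeartbeats 4000000 in
private lemma uniq14 (x : Fin 5 → Fin 5 → ℝ) (hx : IsAssignment e5 x)
    (hIR : SDIR R14 e5 x) (hEff : SDEfficient R14 e5 x) : x = y14 := by
  obtain ⟨hxn, hxs⟩ := hx
  have n00 := hxn 0 0; have n01 := hxn 0 1; have n02 := hxn 0 2; have n03 := hxn 0 3; have n04 := hxn 0 4
  have n10 := hxn 1 0; have n11 := hxn 1 1; have n12 := hxn 1 2; have n13 := hxn 1 3; have n14 := hxn 1 4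
  have n20 := hxn 2 0; have n21 := hxn 2 1; have n22 := hxn 2 2; have n23 := hxn 2 3; have n24 := hxn 2 4
  have n30 := hxn 3 0; have n31 := hxn 3 1; have n32 := hxn 3 2; have n33 := hxn 3 3; have n34 := hxn 3 4
  have n40 := hxn 4 0; have n41 := hxn 4 1; have n42 := hxn 4 2; have n43 := hxn 4 3; have n44 := hxn 4 4
  have s0 := hxs 0; have s1 := hxs 1; have s2 := hxs 2; have s3 := hxs 3; have s4 := hxs 4
  norm_num [e5, Fin.sum_univ_five, Matrix.vecHead, Matrix.vecTail, Matrix.cons_val_one, Matrix.cons_val_two, Matrix.cons_val_three, Matrix.cons_val_four] at s0 s1 s2 s3 s4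
  have A1 := hIR 0 0; have A2 := hIR 0 1; have A3 := hIR 0 2
  have B1 := hIR 1 4; have B2 := hIR 1 2
  have C1 := hIR 2 0; have C2 := hIR 2 3
  have D1 := hIR 3 1; have D2 := hIR 3 3
  have E1 := hIR 4 4; have E2 := hIR 4 2
  norm_num [upperSum, Finset.sum_filter, R14, rank14, Fin.sum_univ_five, e5,
    Matrix.vecHead, Matrix.vecTail, Matrix.cons_val_one, Matrix.cons_val_two, Matrix.cons_val_three, Matrix.cons_val_four] at A1 A2 A3 B1 B2 C1 C2 D1 D2 E1 E2
  -- house 5 is pinned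
  have e14 : x 1 4 = 1/2 := by linarith
  have e44 : x 4 4 = 1/2 := by linarith
  have e04 : x 0 4 = 0 := by linarith
  have e24 : x 2 4 = 0 := by linarith
  have e34 : x 3 4 = 0 := by linarith
  -- the big accounting over houses 1,2,3,4
  have e20 : x 2 0 = 1/2 := by linarith
  have e31 : x 3 1 = 1/2 := by linarith
  have e42 : x 4 2 = 1/2 := by linarith
  have e00 : x 0 0 = x 1 2 := by linarith
  have e01 : x 0 1 = 1/2 := by linarith
  have e02 : x 0 2 = 1/2 - x 1 2 := by linarith
  have e03 : x 0 3 = 0 := by linarith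
  have e10 : x 1 0 = 1/2 - x 1 2 := by linarith
  have e11 : x 1 1 = 0 := by linarith
  have e13 : x 1 3 = 0 := by linarith
  have e21 : x 2 1 = 0 := by linarith
  have e22 : x 2 2 = 0 := by linarith
  have e23 : x 2 3 = 1/2 := by linarith
  have e30 : x 3 0 = 0 := by linarith
  have e32 : x 3 2 = 0 := by linarith
  have e33 : x 3 3 = 1/2 := by linarith
  have e40 : x 4 0 = 0 := by linarith
  have e41 : x 4 1 = 0 := by linarith
  have e43 : x 4 3 = 0 := by linarith
  -- now show the free parameter is zero, using efficiency
  have ht : x 1 2 = 0 := by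
    by_contra hne
    have hpos : 0 < x 1 2 := lt_of_le_of_ne n12 (Ne.symm hne)
    apply hEff
    refine ⟨y14, y14_assign, ?_, 0, ?_, ?_⟩
    · intro i h
      have hi : i = 0 ∨ i = 1 ∨ i = 2 ∨ i = 3 ∨ i = 4 := by omega
      have hh : h = 0 ∨ h = 1 ∨ h = 2 ∨ h = 3 ∨ h = 4 := by omega
      rcases hi with rfl|rfl|rfl|rfl|rfl <;> rcases hh with rfl|rfl|rfl|rfl|rfl <;>
        norm_num [upperSum, Finset.sum_filter, R14, rank14, Fin.sum_univ_five, y14,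
          Matrix.vecHead, Matrix.vecTail, Matrix.cons_val_one, Matrix.cons_val_two, Matrix.cons_val_three, Matrix.cons_val_four] <;> linarith
    · intro h
      have hh : h = 0 ∨ h = 1 ∨ h = 2 ∨ h = 3 ∨ h = 4 := by omega
      rcases hh with rfl|rfl|rfl|rfl|rfl <;>
        norm_num [upperSum, Finset.sum_filter, R14, rank14, Fin.sum_univ_five, y14,
          Matrix.vecHead, Matrix.vecTail, Matrix.cons_val_one, Matrix.cons_val_two, Matrix.cons_val_three, Matrix.cons_val_four] <;> linarith
    · intro hcon
      have := hcon 2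
      norm_num [upperSum, Finset.sum_filter, R14, rank14, Fin.sum_univ_five, y14,
        Matrix.vecHead, Matrix.vecTail, Matrix.cons_val_one, Matrix.cons_val_two, Matrix.cons_val_three, Matrix.cons_val_four] at this
      linarith
  funext i h
  have hi : i = 0 ∨ i = 1 ∨ i = 2 ∨ i = 3 ∨ i = 4 := by omega
  have hh : h = 0 ∨ h = 1 ∨ h = 2 ∨ h = 3 ∨ h = 4 := by omega
  rcases hi with rfl|rfl|rfl|rfl|rfl <;> rcases hh with rfl|rfl|rfl|rfl|rfl <;>
    norm_num [y14, Matrix.vecHead, Matrix.vecTail, Matrix.cons_val_one, Matrix.cons_val_two, Matrix.cons_val_three, Matrix.cons_val_four] <;> linarith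

/-- `y14` is the unique SD-individually rational and SD-efficient
assignment for this profile. -/
theorem unique_ir_eff_assignment_profile14 :
    (IsAssignment e5 y14 ∧ SDIR R14 e5 y14 ∧ SDEfficient R14 e5 y14) ∧
    ∀ x : Fin 5 → Fin 5 → ℝ, IsAssignment e5 x → SDIR R14 e5 x → SDEfficient R14 e5 x →
      x = y14 := by
  exact ⟨⟨y14_assign, y14_SDIR, y14_eff⟩, uniq14⟩
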